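/- For even n ≥ 2, the permutation β_π has order exactly n in the symmetric group S_n; i.e., β_π^n = id and β_π^k ≠ id for 1 ≤ k < n. -/
import Mathlib


/-- The permutator `β_π` on `{1,…,n}` (1-indexed): `β_π(1)=2`, `β_π(n)=n-1`,
and `β_π(i)=i+2·(-1)^i` for `1<i<n`. -/
def betaPi (n : ℕ) (i : ℕ) : ℕ :=
  if i = 1 then 2 else if i = n then n - 1 else if Even i then i + 2 else i - 2

/-- Parametrization of the cycle of `betaPi`. -/
def cyc (n j : ℕ) : ℕ := if j = 0 then 1 else if j ≤ n / 2 then 2 * j else 2 * n + 1 - 2 * j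

lemma betaPi_cyc (n : ℕ) (hn : 2 ≤ n) (h2 : n % 2 = 0) (j : ℕ) (hj : j < n) :
    betaPi n (cyc n j) = cyc n (j + 1) := by
  unfold betaPi cyc
  split_ifs <;> simp_all [Nat.even_iff, Nat.not_even_iff] <;> omega

lemma iter_one (n : ℕ) (hn : 2 ≤ n) (h2 : n % 2 = 0) :
    ∀ k, k ≤ n → (betaPi n)^[k] 1 = cyc n k := by
  intro k
  induction k with
  | zero => intro _; simp [cyc]
  | succ k ih =>
    intro hk
    rw [Function.iterate_succ_apply', ih (by omega), betaPi_cyc n hn h2 k (by omega)]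

lemma exists_cyc (n i : ℕ) (hn : 2 ≤ n) (h2 : n % 2 = 0) (hi : 1 ≤ i) (hi2 : i ≤ n) :
    ∃ j ≤ n, cyc n j = i := by
  by_cases h : i % 2 = 0
  · refine ⟨i / 2, by omega, ?_⟩
    unfold cyc; split_ifs <;> omega
  · refine ⟨n - i / 2, by omega, ?_⟩
    unfold cyc; split_ifs <;> omega

/-- For even `n ≥ 2`, `β_π` has order exactly `n`: `β_π^n = id` on `{1,…,n}`
and `β_π^k ≠ id` for `1 ≤ k < n`. -/
theorem betaPi_order (n : ℕ) (hn : 2 ≤ n) (heven : Even n) :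
    (∀ i ∈ Set.Icc 1 n, (betaPi n)^[n] i = i) ∧
    (∀ k, 1 ≤ k → k < n → ∃ i ∈ Set.Icc 1 n, (betaPi n)^[k] i ≠ i) := by
  have h2 : n % 2 = 0 := Nat.even_iff.mp heven
  have hone : (betaPi n)^[n] 1 = 1 := by
    rw [iter_one n hn h2 n le_rfl]; unfold cyc; split_ifs <;> omega
  constructor
  · rintro i ⟨hi1, hi2⟩
    obtain ⟨j, hj, hcj⟩ := exists_cyc n i hn h2 hi1 hi2
    have : (betaPi n)^[n] ((betaPi n)^[j] 1) = (betaPi n)^[j] 1 := by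
      rw [← Function.iterate_add_apply, Nat.add_comm, Function.iterate_add_apply, hone]
    rw [iter_one n hn h2 j hj, hcj] at this
    exact this
  · intro k hk1 hk2
    refine ⟨1, ⟨le_rfl, by omega⟩, ?_⟩
    rw [iter_one n hn h2 k (by omega)]
    unfold cyc; split_ifs <;> omega
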